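/- Let d ∈ ℚ be a non-square, K = ℚ(√d), and let σ denote the nontrivial element of Gal(K/ℚ). Let a, b ∈ K with Δ = −16(4a³ + 27b²) ≠ 0, and write N(x) = x·σ(x) ∈ ℚ for the norm. Let L be a field containing K together with an element δ satisfying δ⁶ = Δ, let T be transcendental over L, and set t = T/δ ∈ L(T). Then the Weierstrass equation of F⁽⁶⁾, namely Y² = X³ − 3aσ(a)·X + (1/64)(Δt⁶ + 864bσ(b) + σ(Δ)/t⁶), becomes, after the substitution t = T/δ, exactly the equation Y² = X³ − 3N(a)·X + (1/64)(T⁶ + 864N(b) + N(Δ)/T⁶), all of whose coefficients lie in ℚ(T). In particular, the elliptic surface F⁽⁶⁾ attached to the conjugate pair of elliptic curves E₁ : y² = x³ + ax + b over K and E₂ : y² = x³ + σ(a)x + σ(b) has a model defined over ℚ. -/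

import Mathlib

noncomputable section

lemma norm_is_rat (d : ℚ) (K : Type) [Field K] [Algebra ℚ K]
    (sqd : K) (hsqd : sqd ^ 2 = algebraMap ℚ K d)
    (hgen : ∀ x : K, ∃ p q : ℚ, x = algebraMap ℚ K p + algebraMap ℚ K q * sqd)
    (σ : K ≃ₐ[ℚ] K) (hσ : σ sqd = -sqd)
    (x : K) : ∃ r : ℚ, x * σ x = algebraMap ℚ K r := by
  obtain ⟨p, q, hx⟩ := hgen x
  have hσx : σ x = algebraMap ℚ K p - algebraMap ℚ K q * sqd := by
    rw [hx, map_add, map_mul, hσ, AlgEquiv.commutes, AlgEquiv.commutes]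
    ring
  refine ⟨p ^ 2 - q ^ 2 * d, ?_⟩
  rw [hσx, hx, map_sub, map_mul, map_pow, map_pow]
  have : (algebraMap ℚ K p + algebraMap ℚ K q * sqd) *
      (algebraMap ℚ K p - algebraMap ℚ K q * sqd)
      = algebraMap ℚ K p ^ 2 - algebraMap ℚ K q ^ 2 * sqd ^ 2 := by ring
  rw [this, hsqd]


lemma F6_subst_key (L : Type) [Field L] (A B nb δ : L) (hδ0 : δ ≠ 0) (hA : A ≠ 0)
    (h6 : δ ^ 6 = A) :
    (1 / 64 : RatFunc L) *
        (algebraMap L (RatFunc L) A * (RatFunc.X / algebraMap L (RatFunc L) δ) ^ 6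
          + 864 * algebraMap L (RatFunc L) nb
          + algebraMap L (RatFunc L) B / (RatFunc.X / algebraMap L (RatFunc L) δ) ^ 6)
      = (1 / 64 : RatFunc L) *
        (RatFunc.X ^ 6 + 864 * algebraMap L (RatFunc L) nb
          + algebraMap L (RatFunc L) A * algebraMap L (RatFunc L) B / RatFunc.X ^ 6) := by
  have hX : (RatFunc.X : RatFunc L) ≠ 0 := RatFunc.X_ne_zero
  have hCδ : algebraMap L (RatFunc L) δ ≠ 0 := by
    simpa [map_eq_zero_iff _ (algebraMap L (RatFunc L)).injective] using hδ0
  have h6' : (algebraMap L (RatFunc L) δ) ^ 6 = algebraMap L (RatFunc L) A := by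
    rw [← map_pow, h6]
  have hCA : algebraMap L (RatFunc L) A ≠ 0 := by rw [← h6']; exact pow_ne_zero _ hCδ
  rw [RatFunc.algebraMap_eq_C] at h6'
  congr 1
  have hCA' : RatFunc.C A ≠ 0 := by rw [← RatFunc.algebraMap_eq_C]; exact hCA
  field_simp
  rw [← RatFunc.algebraMap_eq_C] at h6'
  linear_combination (algebraMap L (RatFunc L) B * algebraMap L (RatFunc L) δ ^ 6 - RatFunc.X ^ 12) * h6'

/-- Let `K = ℚ(√d)` with `d` a non-square rational, `σ` the nontrivial element of
`Gal(K/ℚ)`, and `E₁ : y² = x³ + ax + b` with conjugate curve `E₂ : y² = x³ + σ(a)x + σ(b)`,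
of discriminant `Δ = −16(4a³+27b²) ≠ 0`. In a field `L ⊇ K` containing a sixth root `δ`
of `Δ`, after substituting `t = T/δ`, the equation of `F⁽⁶⁾` becomes exactly
`Y² = X³ − 3N(a)X + (1/64)(T⁶ + 864N(b) + N(Δ)/T⁶)`, whose coefficients `N(a) = aσ(a)`,
`N(b) = bσ(b)`, `N(Δ) = Δσ(Δ)` are rational; in particular `F⁽⁶⁾` for this conjugate pair
has a model defined over `ℚ`. -/
theorem F6_conjugate_model_over_Q
    (d : ℚ) (hd : ¬∃ r : ℚ, r ^ 2 = d)
    (K : Type) [Field K] [Algebra ℚ K]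
    (sqd : K) (hsqd : sqd ^ 2 = algebraMap ℚ K d)
    (hgen : ∀ x : K, ∃ p q : ℚ, x = algebraMap ℚ K p + algebraMap ℚ K q * sqd)
    (σ : K ≃ₐ[ℚ] K) (hσ : σ sqd = -sqd)
    (a b : K) (hΔ : -16 * (4 * a ^ 3 + 27 * b ^ 2) ≠ 0)
    (L : Type) [Field L] (ι : K →+* L)
    (δ : L) (hδ : δ ^ 6 = ι (-16 * (4 * a ^ 3 + 27 * b ^ 2))) :
    -- the norms `N(a), N(b), N(Δ)` are rational numbers
    (∃ qa : ℚ, a * σ a = algebraMap ℚ K qa) ∧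
    (∃ qb : ℚ, b * σ b = algebraMap ℚ K qb) ∧
    (∃ qΔ : ℚ, (-16 * (4 * a ^ 3 + 27 * b ^ 2)) * σ (-16 * (4 * a ^ 3 + 27 * b ^ 2))
      = algebraMap ℚ K qΔ) ∧
    -- after the substitution `t = T/δ`, the `a₆`-coefficient of `F⁽⁶⁾` becomes exactly
    -- `(1/64)(T⁶ + 864·N(b) + N(Δ)/T⁶)` (the `a₄`-coefficient `−3aσ(a) = −3N(a)` is
    -- literally unchanged), so all coefficients lie in `ℚ(T)`
    (1 / 64 : RatFunc L) *
        (algebraMap L (RatFunc L) (ι (-16 * (4 * a ^ 3 + 27 * b ^ 2)))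
            * (RatFunc.X / algebraMap L (RatFunc L) δ) ^ 6
          + 864 * algebraMap L (RatFunc L) (ι (b * σ b))
          + algebraMap L (RatFunc L) (ι (σ (-16 * (4 * a ^ 3 + 27 * b ^ 2))))
            / (RatFunc.X / algebraMap L (RatFunc L) δ) ^ 6)
      = (1 / 64 : RatFunc L) *
        (RatFunc.X ^ 6 + 864 * algebraMap L (RatFunc L) (ι (b * σ b))
          + algebraMap L (RatFunc L)
              (ι ((-16 * (4 * a ^ 3 + 27 * b ^ 2)) * σ (-16 * (4 * a ^ 3 + 27 * b ^ 2))))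
            / RatFunc.X ^ 6) := by
  refine ⟨norm_is_rat d K sqd hsqd hgen σ hσ a, norm_is_rat d K sqd hsqd hgen σ hσ b,
    norm_is_rat d K sqd hsqd hgen σ hσ _, ?_⟩
  set Δ : K := -16 * (4 * a ^ 3 + 27 * b ^ 2) with hΔdef
  have hιΔ : ι Δ ≠ 0 := fun h => hΔ ((map_eq_zero_iff ι ι.injective).mp h)
  have hδ0 : δ ≠ 0 := by
    intro h
    apply hιΔ
    rw [← hδ, h]
    ring
  have hX : (RatFunc.X : RatFunc L) ≠ 0 := RatFunc.X_ne_zero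
  have hCδ : algebraMap L (RatFunc L) δ ≠ 0 := by
    simpa [map_eq_zero_iff _ (algebraMap L (RatFunc L)).injective] using hδ0
  have hCΔ : algebraMap L (RatFunc L) (ι Δ) ≠ 0 := by
    simpa [map_eq_zero_iff _ (algebraMap L (RatFunc L)).injective] using hιΔ
  have h6 : (algebraMap L (RatFunc L) δ) ^ 6 = algebraMap L (RatFunc L) (ι Δ) := by
    rw [← map_pow, hδ]
  rw [show ι (Δ * σ Δ) = ι Δ * ι (σ Δ) from map_mul ι Δ (σ Δ),
    map_mul (algebraMap L (RatFunc L)) (ι Δ) (ι (σ Δ))]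
  exact F6_subst_key L (ι Δ) (ι (σ Δ)) (ι (b * σ b)) δ hδ0 hιΔ hδ
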